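/- Consider the triple (i, j, k) with i = k + j (the excluded case in Lemma 10). Then the closure of the corresponding braid has more than one component. Abstract permutation version: let c = (1 2 ⋯ i) ∈ S_i be the i-cycle and consider the permutation underlying the braid (VB ij)·B_k whose underlying permutation is c^j composed with the cycle (1 2 ⋯ k+1); when i = k+j and i ≥ 2, this permutation has a fixed point or a cycle of length < i, hence is not an i-cycle. -/

import Mathlib

lemma aux_bk_zero : ∀ (i k : ℕ) (hk : k < i),
    (((List.finRange k).reverse).map (fun m =>
      Equiv.swap (⟨m.val, by have := m.isLt; omega⟩ : Fin i)
        ⟨m.val + 1, by have := m.isLt; omega⟩)).prod ⟨0, by omega⟩ = ⟨k, hk⟩ := by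
  intro i k
  induction k with
  | zero => intro hk; simp
  | succ k ih =>
    intro hk
    rw [List.finRange_succ_last, List.reverse_append, List.map_append, List.prod_append]
    simp only [List.reverse_singleton, List.map_cons, List.map_nil, List.prod_cons,
      List.prod_nil, mul_one, List.map_reverse, List.map_map]
    have hk' : k < i := by omega
    rw [Equiv.Perm.mul_apply]
    have h2 : (((List.finRange k).map ((fun m : Fin (k+1) =>
        Equiv.swap (⟨m.val, by have := m.isLt; omega⟩ : Fin i)
          ⟨m.val + 1, by have := m.isLt; omega⟩) ∘ Fin.castSucc)).reverse.prod
        (⟨0, by omega⟩ : Fin i)) = ⟨k, hk'⟩ := by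
      rw [← List.map_reverse]
      exact ih hk'
    rw [h2]
    have h1 : (⟨(Fin.last k).val, by omega⟩ : Fin i) = ⟨k, hk'⟩ := rfl
    rw [show Equiv.swap (⟨(Fin.last k).val, by have := (Fin.last k).isLt; omega⟩ : Fin i)
        ⟨(Fin.last k).val + 1, by have := (Fin.last k).isLt; omega⟩
        = Equiv.swap ⟨k, hk'⟩ ⟨k+1, hk⟩ from rfl]
    rw [Equiv.swap_apply_left]

open Fin.CommRing in
lemma aux_rot (n : ℕ) : ∀ (j : ℕ) (x : Fin (n+1)),
    ((finRotate (n+1)) ^ j) x = x + (j : Fin (n+1)) := by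
  intro j
  induction j with
  | zero => intro x; simp
  | succ j ih =>
    intro x
    rw [pow_succ, Equiv.Perm.mul_apply, finRotate_succ_apply, ih]
    push_cast
    ring

open Fin.CommRing in
lemma aux_fix (n j k : ℕ) (hik : n + 1 = k + j) (hk : k < n + 1) :
    ((finRotate (n+1)) ^ j *
      (((List.finRange k).reverse).map (fun m =>
        Equiv.swap (⟨m.val, by have := m.isLt; omega⟩ : Fin (n+1))
          ⟨m.val + 1, by have := m.isLt; omega⟩)).prod) ⟨0, by omega⟩
      = ⟨0, by omega⟩ := by
  have hb0 : (((List.finRange k).reverse).map (fun m =>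
      Equiv.swap (⟨m.val, by have := m.isLt; omega⟩ : Fin (n+1))
        ⟨m.val + 1, by have := m.isLt; omega⟩)).prod ⟨0, by omega⟩ = ⟨k, hk⟩ :=
    aux_bk_zero (n+1) k hk
  rw [Equiv.Perm.mul_apply, hb0, aux_rot]
  have hcast : ((j : ℕ) : Fin (n+1)) = ⟨j % (n+1), Nat.mod_lt _ (by omega)⟩ := by
    simp [Fin.ext_iff, Fin.val_natCast]
  rw [hcast]
  apply Fin.ext
  rw [Fin.val_add, Fin.val_mk, Fin.val_mk, Fin.val_mk]
  rcases Nat.eq_zero_or_pos k with h | h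
  · have hjn : j = n + 1 := by omega
    rw [h, hjn, Nat.mod_self, Nat.add_zero, Nat.zero_mod]
  · have hjlt : j < n + 1 := by omega
    rw [Nat.mod_eq_of_lt hjlt, ← hik, Nat.mod_self]

lemma aux_card (n : ℕ) (p : Equiv.Perm (Fin (n+1))) (x : Fin (n+1))
    (h0 : p x = x) : p.support.card ≠ n + 1 := by
  intro hcard
  have hmem : x ∉ p.support := by
    rw [Equiv.Perm.mem_support, not_not]
    exact h0
  have huniv : p.support = Finset.univ := by
    apply Finset.eq_univ_of_card
    rw [Fintype.card_fin]
    exact hcard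
  rw [huniv] at hmem
  exact hmem (Finset.mem_univ _)

/-- The excluded case `i = k + j` of Lemma 10: the underlying permutation of
the braid of `(i,j,k)`, namely the `j`-th power of the `i`-cycle composed with
the `(k+1)`-cycle coming from `B_k = σ_k ⋯ σ_1`, is not an `i`-cycle, so the
closure has more than one component. -/
theorem stmt_15 (i j k : ℕ) (hi : 2 ≤ i) (hj : 1 ≤ j) (hik : i = k + j)
    (hk : k < i) :
    ¬ (let bk : Equiv.Perm (Fin i) :=
        (((List.finRange k).reverse).map (fun m =>
          Equiv.swap (⟨m.val, by have := m.isLt; omega⟩ : Fin i)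
            ⟨m.val + 1, by have := m.isLt; omega⟩)).prod
      ((finRotate i) ^ j * bk).IsCycle ∧
        ((finRotate i) ^ j * bk).support.card = i) := by
  intro h
  obtain ⟨hc, hcard⟩ := h
  obtain ⟨n, rfl⟩ : ∃ n, i = n + 1 := ⟨i - 1, by omega⟩
  exact aux_card n _ _ (aux_fix n j k hik hk) hcard
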